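/- arXiv:2110.12132 — 2 statements merged into one kernel-verified Lean document; each statement's English description precedes it below -/
import Mathlib

section
/- The G-optimal value equals the dimension: the infimum over all designs π with M(π) invertible of g(π) = max_{1≤i≤k} φ_iᵀ M(π)⁻¹ φ_i is exactly d, and this infimum is attained by some design. -/
open Matrix BigOperators

/-- A design is a probability vector over the `k` candidate points. -/
def IsDesign {k : ℕ} (π : Fin k → ℝ) : Prop :=
  (∀ i, 0 ≤ π i) ∧ ∑ i, π i = 1

/-- The information matrix `M(π) = ∑ i, π i • φ i φ iᵀ` of a design. -/
noncomputable def infoMatrix {d k : ℕ} (φ : Fin k → (Fin d → ℝ)) (π : Fin k → ℝ) :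
    Matrix (Fin d) (Fin d) ℝ :=
  ∑ i, π i • vecMulVec (φ i) (φ i)

lemma sum_mulVec' {d k : ℕ} (A : Fin k → Matrix (Fin d) (Fin d) ℝ) (x : Fin d → ℝ) :
    (∑ i, A i) *ᵥ x = ∑ i, A i *ᵥ x := by
  ext a
  simp only [mulVec, dotProduct, Finset.sum_apply, Finset.sum_mul, Matrix.sum_apply]
  rw [Finset.sum_comm]

lemma dotProduct_sum' {d k : ℕ} (x : Fin d → ℝ) (v : Fin k → Fin d → ℝ) :
    x ⬝ᵥ (∑ i, v i) = ∑ i, x ⬝ᵥ v i := by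
  simp only [dotProduct, Finset.sum_apply, Finset.mul_sum]
  rw [Finset.sum_comm]

lemma vecMulVec_mulVec' {d : ℕ} (u v x : Fin d → ℝ) :
    vecMulVec u v *ᵥ x = (v ⬝ᵥ x) • u := by
  ext a
  simp only [mulVec, vecMulVec_apply, dotProduct, Pi.smul_apply, smul_eq_mul, Finset.sum_mul]
  exact Finset.sum_congr rfl fun b _ => by ring

lemma quadform {d k : ℕ} (φ : Fin k → (Fin d → ℝ)) (π : Fin k → ℝ) (x : Fin d → ℝ) :
    x ⬝ᵥ (infoMatrix φ π) *ᵥ x = ∑ i, π i * (φ i ⬝ᵥ x)^2 := by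
  rw [infoMatrix, sum_mulVec', dotProduct_sum']
  refine Finset.sum_congr rfl fun i _ => ?_
  rw [smul_mulVec, vecMulVec_mulVec', dotProduct_smul, dotProduct_smul, smul_eq_mul,
    smul_eq_mul, dotProduct_comm]
  ring

lemma herm {d k : ℕ} (φ : Fin k → (Fin d → ℝ)) (π : Fin k → ℝ) :
    (infoMatrix φ π).IsHermitian := by
  show _ = _
  ext a b
  simp only [infoMatrix, conjTranspose_apply, Matrix.sum_apply, Matrix.smul_apply,
    vecMulVec_apply, smul_eq_mul, star_trivial]
  exact Finset.sum_congr rfl fun i _ => by ring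

lemma psd {d k : ℕ} (φ : Fin k → (Fin d → ℝ)) (π : Fin k → ℝ) (hpos : ∀ i, 0 ≤ π i) :
    (infoMatrix φ π).PosSemidef := by
  refine PosSemidef.of_dotProduct_mulVec_nonneg (herm φ π) fun x => ?_
  rw [star_trivial, quadform]
  exact Finset.sum_nonneg fun i _ => mul_nonneg (hpos i) (sq_nonneg _)

lemma trace_mul_vecMulVec {d : ℕ} (A : Matrix (Fin d) (Fin d) ℝ) (u : Fin d → ℝ) :
    Matrix.trace (A * vecMulVec u u) = u ⬝ᵥ A *ᵥ u := by
  simp only [Matrix.trace, Matrix.diag_apply, Matrix.mul_apply, vecMulVec_apply,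
    dotProduct, mulVec, Finset.mul_sum]
  exact Finset.sum_congr rfl fun a _ => Finset.sum_congr rfl fun b _ => by ring

lemma avg_eq_dim {d k : ℕ} (φ : Fin k → (Fin d → ℝ)) (π : Fin k → ℝ)
    (hdes : IsDesign π) (hu : IsUnit (infoMatrix φ π)) :
    ∑ i, π i * (φ i ⬝ᵥ (infoMatrix φ π)⁻¹ *ᵥ φ i) = (d : ℝ) := by
  set M := infoMatrix φ π with hM
  have h1 : ∀ i, π i * (φ i ⬝ᵥ M⁻¹ *ᵥ φ i)
      = Matrix.trace (M⁻¹ * (π i • vecMulVec (φ i) (φ i))) := by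
    intro i
    rw [Matrix.mul_smul, Matrix.trace_smul, trace_mul_vecMulVec, smul_eq_mul]
  calc ∑ i, π i * (φ i ⬝ᵥ M⁻¹ *ᵥ φ i)
      = ∑ i, Matrix.trace (M⁻¹ * (π i • vecMulVec (φ i) (φ i))) :=
        Finset.sum_congr rfl fun i _ => h1 i
    _ = Matrix.trace (M⁻¹ * M) := by
        rw [hM, infoMatrix, Matrix.mul_sum, Matrix.trace_sum]
    _ = (d : ℝ) := by
        rw [Matrix.nonsing_inv_mul M ((Matrix.isUnit_iff_isUnit_det M).mp hu),
          Matrix.trace_one]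
        simp

lemma posdef_of_quad {d k : ℕ} (φ : Fin k → (Fin d → ℝ))
    (hspan : Submodule.span ℝ (Set.range φ) = ⊤) (π : Fin k → ℝ)
    (hpos : ∀ i, 0 < π i) : (infoMatrix φ π).PosDef := by
  refine PosDef.of_dotProduct_mulVec_pos (herm φ π) fun x hx => ?_
  rw [star_trivial, quadform]
  -- there exists i with φ i ⬝ᵥ x ≠ 0
  have hex : ∃ i, φ i ⬝ᵥ x ≠ 0 := by
    by_contra h
    push_neg at h
    have hall : ∀ v ∈ Submodule.span ℝ (Set.range φ), v ⬝ᵥ x = 0 := by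
      intro v hv
      induction hv using Submodule.span_induction with
      | mem v hv => obtain ⟨i, rfl⟩ := hv; exact h i
      | zero => exact zero_dotProduct x
      | add v w _ _ hv hw => rw [add_dotProduct, hv, hw, add_zero]
      | smul c v _ hv => rw [smul_dotProduct, hv, smul_zero]
    have : x ⬝ᵥ x = 0 := hall x (by rw [hspan]; trivial)
    exact hx (by simpa using (dotProduct_self_eq_zero).mp this)
  obtain ⟨i, hi⟩ := hex
  have : 0 < π i * (φ i ⬝ᵥ x)^2 := mul_pos (hpos i) (by positivity)
  refine Finset.sum_pos' (fun j _ => mul_nonneg (hpos j).le (sq_nonneg _)) ⟨i, Finset.mem_univ i, this⟩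

lemma scalar_aux (n : ℕ) (c : ℝ) (hc : (n : ℝ) + 1 < c)
    (h : ∀ t : ℝ, 0 < t → t < 1 → (1 - t)^n * (1 + t * (c - 1)) ≤ 1) : False := by
  set N : ℝ := (n : ℝ) with hN
  have hN0 : 0 ≤ N := Nat.cast_nonneg n
  have hs : 0 < c - (N + 1) := by linarith
  set t : ℝ := min (1/2) ((c - (N+1)) / (2 * (N * (c-1) + 1))) with ht
  have hden : 0 < 2 * (N * (c-1) + 1) := by nlinarith
  have ht0 : 0 < t := lt_min (by norm_num) (div_pos hs hden)
  have ht1 : t < 1 := lt_of_le_of_lt (min_le_left _ _) (by norm_num)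
  have hb : 1 + (n : ℝ) * (-t) ≤ (1 + (-t))^n := one_add_mul_le_pow (by linarith) n
  have hfac : (0:ℝ) ≤ 1 + t * (c - 1) := by nlinarith
  have hle : (1 - N * t) * (1 + t * (c-1)) ≤ (1 - t)^n * (1 + t * (c-1)) := by
    apply mul_le_mul_of_nonneg_right _ hfac
    calc (1 - N * t) = 1 + (n:ℝ) * (-t) := by ring
      _ ≤ (1 + (-t))^n := hb
      _ = (1 - t)^n := by ring_nf
  have hkey := (hle.trans (h t ht0 ht1))
  -- so 1 + t*(c-1-N) - N*(c-1)*t^2 ≤ 1, i.e. (c-1-N) ≤ N*(c-1)*t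
  have h2 : c - 1 - N ≤ N * (c-1) * t := by nlinarith
  -- but t ≤ (c-(N+1))/(2*(N*(c-1)+1)) gives N*(c-1)*t < c-1-N
  have h3 : t ≤ (c - (N+1)) / (2 * (N * (c-1) + 1)) := min_le_right _ _
  have h4 : N * (c-1) * t ≤ N * (c-1) * ((c - (N+1)) / (2 * (N * (c-1) + 1))) := by
    apply mul_le_mul_of_nonneg_left h3
    nlinarith
  have h5 : N * (c-1) * ((c - (N+1)) / (2 * (N * (c-1) + 1))) < c - 1 - N := by
    rw [← mul_div_assoc, div_lt_iff₀ hden]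
    nlinarith
  linarith

lemma det_rank_one_update {d : ℕ} (M : Matrix (Fin d) (Fin d) ℝ) (hM : IsUnit M.det)
    (u v : Fin d → ℝ) :
    (M + vecMulVec v u).det = M.det * (1 + u ⬝ᵥ M⁻¹ *ᵥ v) := by
  have h1 : (1 + replicateRow Unit u * M⁻¹ * replicateCol Unit v).det = 1 + u ⬝ᵥ M⁻¹ *ᵥ v := by
    rw [det_unique, Matrix.add_apply, Matrix.one_apply_eq, Matrix.mul_assoc, ← replicateCol_mulVec,
      replicateRow_mul_replicateCol_apply]
  rw [vecMulVec_eq Unit, det_add_replicateCol_mul_replicateRow hM, h1]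

lemma smul_vecMulVec {d : ℕ} (t : ℝ) (u v : Fin d → ℝ) :
    t • vecMulVec u v = vecMulVec (t • u) v := by
  ext a b
  simp [vecMulVec_apply, mul_assoc]

lemma det_mix {d : ℕ} (hd : 0 < d) (M : Matrix (Fin d) (Fin d) ℝ) (hM : IsUnit M.det)
    (u : Fin d → ℝ) (t : ℝ) (ht0 : 0 < t) (ht1 : t < 1) :
    ((1-t) • M + t • vecMulVec u u).det
      = (1-t)^(d-1) * (1 + t * ((u ⬝ᵥ M⁻¹ *ᵥ u) - 1)) * M.det := by
  obtain ⟨n, rfl⟩ : ∃ n, d = n + 1 := ⟨d - 1, (Nat.succ_pred_eq_of_pos hd).symm⟩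
  have h1t : (0:ℝ) < 1 - t := by linarith
  set s : ℝ := t / (1-t) with hs
  have hts : (1-t) * s = t := by rw [hs]; field_simp
  have key : (1-t) • M + t • vecMulVec u u = (1-t) • (M + vecMulVec (s • u) u) := by
    rw [smul_add, ← smul_vecMulVec, smul_smul, hts]
  rw [key, det_smul, det_rank_one_update M hM, mulVec_smul, dotProduct_smul, smul_eq_mul,
    Fintype.card_fin]
  have hexp : (1 - t) * (1 + s * (u ⬝ᵥ M⁻¹ *ᵥ u)) = 1 + t * ((u ⬝ᵥ M⁻¹ *ᵥ u) - 1) := by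
    rw [hs]; field_simp; ring
  simp only [Nat.add_sub_cancel, pow_succ]
  linear_combination (1-t)^n * M.det * hexp

lemma infoMatrix_mix {d k : ℕ} (φ : Fin k → (Fin d → ℝ)) (π : Fin k → ℝ) (i : Fin k) (t : ℝ) :
    infoMatrix φ (fun j => (1-t) * π j + t * (if j = i then 1 else 0))
      = (1-t) • infoMatrix φ π + t • vecMulVec (φ i) (φ i) := by
  have h : ∀ j : Fin k, ((1-t) * π j + t * (if j = i then 1 else 0)) • vecMulVec (φ j) (φ j)
      = (1-t) • (π j • vecMulVec (φ j) (φ j))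
        + (t * (if j = i then 1 else 0)) • vecMulVec (φ j) (φ j) := by
    intro j; rw [add_smul, mul_smul]
  rw [infoMatrix]
  simp_rw [h]
  rw [Finset.sum_add_distrib, ← Finset.smul_sum, ← infoMatrix]
  congr 1
  rw [Finset.sum_eq_single i]
  · simp
  · intro j _ hj; simp [hj]
  · intro h; exact absurd (Finset.mem_univ i) h

lemma dim_le_sup {d k : ℕ} (hk : 0 < k) (φ : Fin k → (Fin d → ℝ)) (π : Fin k → ℝ)
    (hdes : IsDesign π) (hu : IsUnit (infoMatrix φ π)) :
    (d : ℝ) ≤ ⨆ i, φ i ⬝ᵥ (infoMatrix φ π)⁻¹ *ᵥ φ i := by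
  haveI : Nonempty (Fin k) := ⟨⟨0, hk⟩⟩
  set c : Fin k → ℝ := fun i => φ i ⬝ᵥ (infoMatrix φ π)⁻¹ *ᵥ φ i with hc
  have hbdd : BddAbove (Set.range c) := Set.Finite.bddAbove (Set.finite_range c)
  calc (d : ℝ) = ∑ i, π i * c i := (avg_eq_dim φ π hdes hu).symm
    _ ≤ ∑ i, π i * (⨆ j, c j) :=
        Finset.sum_le_sum fun i _ => mul_le_mul_of_nonneg_left (le_ciSup hbdd i) (hdes.1 i)
    _ = ⨆ j, c j := by rw [← Finset.sum_mul, hdes.2, one_mul]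

theorem G_optimal_value_eq_dim {d k : ℕ} (hd : 0 < d) (hk : 0 < k)
    (φ : Fin k → (Fin d → ℝ))
    (hspan : Submodule.span ℝ (Set.range φ) = ⊤) :
    IsLeast {x : ℝ | ∃ π, IsDesign π ∧ IsUnit (infoMatrix φ π) ∧
      (⨆ i, φ i ⬝ᵥ (infoMatrix φ π)⁻¹ *ᵥ φ i) = x} (d : ℝ) := by
  haveI : Nonempty (Fin k) := ⟨⟨0, hk⟩⟩
  constructor
  · -- membership : there is a design attaining d
    -- maximize the determinant over the simplex
    have hcont : Continuous (fun π : Fin k → ℝ => (infoMatrix φ π).det) := by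
      apply Continuous.matrix_det
      exact continuous_finset_sum _ fun i _ => (continuous_apply i).smul continuous_const
    obtain ⟨π₀, hπ₀S, hπ₀pos⟩ : ∃ π₀, π₀ ∈ stdSimplex ℝ (Fin k) ∧ ∀ i, 0 < π₀ i := by
      refine ⟨fun _ => (k : ℝ)⁻¹, ⟨fun i => by positivity, ?_⟩, fun i => by positivity⟩
      simp [Finset.sum_const, Finset.card_univ]
      field_simp
    obtain ⟨π', hπ'S, hmax⟩ := (isCompact_stdSimplex ℝ (Fin k)).exists_isMaxOn
      ⟨π₀, hπ₀S⟩ hcont.continuousOn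
    obtain ⟨hpos, hsum⟩ := hπ'S
    have hdes : IsDesign π' := ⟨hpos, hsum⟩
    set M := infoMatrix φ π' with hM
    have hdet0 : 0 < (infoMatrix φ π₀).det := (posdef_of_quad φ hspan π₀ hπ₀pos).det_pos
    have hdetM : 0 < M.det := lt_of_lt_of_le hdet0 (hmax hπ₀S)
    have hud : IsUnit M.det := isUnit_iff_ne_zero.mpr (ne_of_gt hdetM)
    have hu : IsUnit M := (Matrix.isUnit_iff_isUnit_det M).mpr hud
    set c : Fin k → ℝ := fun i => φ i ⬝ᵥ M⁻¹ *ᵥ φ i with hc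
    obtain ⟨n, hdn⟩ : ∃ n, d = n + 1 := ⟨d - 1, (Nat.succ_pred_eq_of_pos hd).symm⟩
    -- key inequality: every c i ≤ d
    have hci : ∀ i, c i ≤ (d : ℝ) := by
      intro i
      by_contra hgt
      push_neg at hgt
      refine scalar_aux n (c i) ?_ ?_
      · rw [show ((n:ℝ) + 1) = ((d:ℕ) : ℝ) by rw [hdn]; push_cast; ring]
        exact hgt
      · intro t ht0 ht1
        set πt : Fin k → ℝ := fun j => (1-t) * π' j + t * (if j = i then 1 else 0) with hπt
        have hπtS : πt ∈ stdSimplex ℝ (Fin k) := by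
          constructor
          · intro j
            have : (0:ℝ) ≤ t * (if j = i then 1 else 0) := by positivity
            have h1 : (0:ℝ) ≤ (1-t) * π' j := mul_nonneg (by linarith) (hpos j)
            simpa [hπt] using add_nonneg h1 this
          · simp only [hπt, Finset.sum_add_distrib, ← Finset.mul_sum, hsum]
            rw [Finset.sum_ite_eq' Finset.univ i (fun _ => (1:ℝ))]
            simp
        have hle := hmax hπtS
        have hdet_eq : (infoMatrix φ πt).det
            = (1-t)^(d-1) * (1 + t * (c i - 1)) * M.det := by
          rw [hπt, infoMatrix_mix, ← hM, det_mix hd M hud (φ i) t ht0 ht1]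
        have : (1-t)^(d-1) * (1 + t * (c i - 1)) * M.det ≤ M.det := by
          rw [← hdet_eq]; exact hle
        have h2 : (1-t)^(d-1) * (1 + t * (c i - 1)) ≤ 1 := by
          by_contra hcon
          push_neg at hcon
          nlinarith
        have hdn1 : d - 1 = n := by omega
        rw [hdn1] at h2
        exact h2
    have hsup_le : (⨆ i, c i) ≤ (d : ℝ) := ciSup_le hci
    have hle_sup : (d : ℝ) ≤ ⨆ i, c i := dim_le_sup hk φ π' hdes hu
    exact ⟨π', hdes, hu, le_antisymm hsup_le hle_sup⟩
  · rintro x ⟨π, hdes, hu, rfl⟩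
    exact dim_le_sup hk φ π hdes hu
end

section
/- Uniqueness of the optimal information matrix: if π and π' are both D-optimal designs (each maximizing det M(·) over all designs, with invertible information matrices), then M(π) = M(π'). -/
open Matrix BigOperators

lemma posSemidef_vecMulVec_self {d : ℕ} (v : Fin d → ℝ) :
    (vecMulVec v v).PosSemidef := by
  have h : vecMulVec v v = (replicateRow (Fin 1) v)ᴴ * replicateRow (Fin 1) v := by
    rw [vecMulVec_eq (Fin 1), conjTranspose_replicateRow]
    exact congrArg (· * replicateRow (Fin 1) v) (by ext i j; simp [replicateCol])
  rw [h]
  exact posSemidef_conjTranspose_mul_self _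

lemma posSemidef_smul_of_nonneg {d : ℕ} {M : Matrix (Fin d) (Fin d) ℝ}
    (hM : M.PosSemidef) {c : ℝ} (hc : 0 ≤ c) : (c • M).PosSemidef := by
  refine ⟨?_, fun x => ?_⟩
  · show (c • M)ᴴ = c • M
    rw [conjTranspose_smul, hM.1]
    simp
  · exact (hM.smul hc).2 x

lemma infoMatrix_posSemidef {d k : ℕ} (φ : Fin k → (Fin d → ℝ)) {π : Fin k → ℝ}
    (hπ : ∀ i, 0 ≤ π i) : (infoMatrix φ π).PosSemidef := by
  unfold infoMatrix
  refine Finset.sum_induction _ _ (fun a b ha hb => ha.add hb) .zero ?_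
  exact fun i _ => posSemidef_smul_of_nonneg (posSemidef_vecMulVec_self (φ i)) (hπ i)

lemma posSemidef_det_nonneg {d : ℕ} {M : Matrix (Fin d) (Fin d) ℝ}
    (hM : M.PosSemidef) : 0 ≤ M.det := by
  rw [hM.1.det_eq_prod_eigenvalues]
  exact Finset.prod_nonneg fun i _ => by simpa using hM.eigenvalues_nonneg i

/-- Strict log-concavity of the determinant at the midpoint: if the determinant of the
midpoint of two positive semidefinite matrices with nonzero determinants is at most the
geometric mean of their determinants, then the matrices are equal. -/
lemma midpoint_det_le_imp_eq {n : ℕ} {A B : Matrix (Fin n) (Fin n) ℝ}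
    (hA : A.PosSemidef) (hB : B.PosSemidef) (hdA : A.det ≠ 0) (hdB : B.det ≠ 0)
    (h : (((2:ℝ)⁻¹) • (A + B)).det ^ 2 ≤ A.det * B.det) : A = B := by
  have hdApos : 0 < A.det := lt_of_le_of_ne (posSemidef_det_nonneg hA) (Ne.symm hdA)
  -- square root of A
  obtain ⟨S, hS, hSS⟩ : ∃ S : Matrix (Fin n) (Fin n) ℝ, S.IsHermitian ∧ S * S = A := by
    set V := (hA.1.eigenvectorUnitary : Matrix (Fin n) (Fin n) ℝ)
    have hVV : star V * V = 1 := (Matrix.mem_unitaryGroup_iff').mp hA.1.eigenvectorUnitary.2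
    have hAs : A = V * diagonal (hA.1.eigenvalues) * star V := by
      have := hA.1.spectral_theorem
      simpa using this
    refine ⟨V * diagonal (fun i => Real.sqrt (hA.1.eigenvalues i)) * star V, ?_, ?_⟩
    · simp [IsHermitian, Matrix.star_eq_conjTranspose, conjTranspose_mul, Matrix.mul_assoc]
    · have hD : diagonal (fun i => Real.sqrt (hA.1.eigenvalues i))
          * diagonal (fun i => Real.sqrt (hA.1.eigenvalues i)) = diagonal (hA.1.eigenvalues) := by
        rw [diagonal_mul_diagonal]
        congr 1; funext i; exact Real.mul_self_sqrt (hA.eigenvalues_nonneg i)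
      calc V * diagonal (fun i => Real.sqrt (hA.1.eigenvalues i)) * star V
            * (V * diagonal (fun i => Real.sqrt (hA.1.eigenvalues i)) * star V)
          = V * (diagonal (fun i => Real.sqrt (hA.1.eigenvalues i)) * (star V * V)
            * diagonal (fun i => Real.sqrt (hA.1.eigenvalues i))) * star V := by
            simp only [Matrix.mul_assoc]
        _ = A := by rw [hVV, Matrix.mul_one, hD]; exact hAs.symm
  have hdS2 : S.det * S.det = A.det := by rw [← det_mul, hSS]
  have hdS : S.det ≠ 0 := by
    intro h0; rw [h0, mul_zero] at hdS2; exact hdA hdS2.symm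
  have hSunit : IsUnit S.det := isUnit_iff_ne_zero.mpr hdS
  have hSinv : S * S⁻¹ = 1 := mul_nonsing_inv S hSunit
  have hinvS : S⁻¹ * S = 1 := nonsing_inv_mul S hSunit
  have hSinvHerm : (S⁻¹)ᴴ = S⁻¹ := by rw [conjTranspose_nonsing_inv, hS]
  set C := S⁻¹ * B * S⁻¹ with hCdef
  have hC : C.PosSemidef := by
    have := hB.mul_mul_conjTranspose_same (S⁻¹)
    rwa [hSinvHerm] at this
  have hB' : S * C * S = B := by
    rw [hCdef]
    calc S * (S⁻¹ * B * S⁻¹) * S = (S * S⁻¹) * B * (S⁻¹ * S) := by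
          simp only [Matrix.mul_assoc]
      _ = B := by rw [hSinv, hinvS, Matrix.one_mul, Matrix.mul_one]
  have hABC : A + B = S * (1 + C) * S := by
    rw [Matrix.mul_add, Matrix.mul_one, Matrix.add_mul, hSS, hB']
  -- eigenvalues of C
  set μ := hC.1.eigenvalues with hμdef
  have hμnn : ∀ i, 0 ≤ μ i := fun i => hC.eigenvalues_nonneg i
  have hdetC : C.det = ∏ i, μ i := by
    have := hC.1.det_eq_prod_eigenvalues
    simpa using this
  have hdetB : B.det = A.det * C.det := by
    rw [← hB', det_mul, det_mul]
    linear_combination C.det * hdS2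
  have hdetCne : C.det ≠ 0 := by
    intro h0; rw [h0, mul_zero] at hdetB; exact hdB hdetB
  have hμpos : ∀ i, 0 < μ i := by
    intro i
    rcases (hμnn i).lt_or_eq with h' | h'
    · exact h'
    · exfalso; apply hdetCne
      rw [hdetC]
      exact Finset.prod_eq_zero (Finset.mem_univ i) h'.symm
  -- determinant of 1 + C
  set U := (hC.1.eigenvectorUnitary : Matrix (Fin n) (Fin n) ℝ) with hUdef
  have hUU : U * star U = 1 := (Matrix.mem_unitaryGroup_iff).mp hC.1.eigenvectorUnitary.2
  have hUdet : U.det * (star U).det = 1 := by rw [← det_mul, hUU, det_one]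
  have hspec : C = U * diagonal (RCLike.ofReal ∘ μ) * star U := by
    have := hC.1.spectral_theorem
    rwa [Unitary.conjStarAlgAut_apply] at this
  have h1C : (1 : Matrix (Fin n) (Fin n) ℝ) + C
      = U * (1 + diagonal (RCLike.ofReal ∘ μ)) * star U := by
    rw [Matrix.mul_add, Matrix.mul_one, Matrix.add_mul, hUU, ← hspec]
  have hdiag : (1 : Matrix (Fin n) (Fin n) ℝ) + diagonal (RCLike.ofReal ∘ μ)
      = diagonal (fun i => 1 + μ i) := by
    rw [← diagonal_one, diagonal_add]
    rfl
  have hdet1C : ((1 : Matrix (Fin n) (Fin n) ℝ) + C).det = ∏ i, (1 + μ i) := by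
    rw [h1C, det_mul, det_mul, hdiag, det_diagonal]
    linear_combination (∏ i, (1 + μ i)) * hUdet
  -- turn the hypothesis into a product inequality
  have hdetmid : (((2:ℝ)⁻¹) • (A + B)).det = (2:ℝ)⁻¹ ^ n * (A.det * ∏ i, (1 + μ i)) := by
    rw [det_smul, hABC, det_mul, det_mul, Fintype.card_fin, ← hdet1C]
    linear_combination ((2:ℝ)⁻¹ ^ n * ((1 : Matrix (Fin n) (Fin n) ℝ) + C).det) * hdS2
  have hprodle : ((2:ℝ)⁻¹ ^ n * ∏ i, (1 + μ i)) ^ 2 ≤ ∏ i, μ i := by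
    have h2 : ((2:ℝ)⁻¹ ^ n * (A.det * ∏ i, (1 + μ i))) ^ 2 ≤ A.det * (A.det * ∏ i, μ i) := by
      rw [← hdetmid, ← hdetC, ← hdetB]; exact h
    have h3 : A.det ^ 2 * ((2⁻¹ ^ n * ∏ i, (1 + μ i)) ^ 2) ≤ A.det ^ 2 * ∏ i, μ i := by
      calc A.det ^ 2 * ((2⁻¹ ^ n * ∏ i, (1 + μ i)) ^ 2)
          = ((2:ℝ)⁻¹ ^ n * (A.det * ∏ i, (1 + μ i))) ^ 2 := by ring
        _ ≤ A.det * (A.det * ∏ i, μ i) := h2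
        _ = A.det ^ 2 * ∏ i, μ i := by ring
    exact le_of_mul_le_mul_left h3 (by positivity)
  have hgprod : (∏ i, ((1 + μ i) * 2⁻¹) ^ 2) = ((2:ℝ)⁻¹ ^ n * ∏ i, (1 + μ i)) ^ 2 := by
    rw [Finset.prod_pow, Finset.prod_mul_distrib, Finset.prod_const]
    simp [mul_comm, Finset.card_univ]
  -- all eigenvalues equal one
  have hμ1 : ∀ i, μ i = 1 := by
    by_contra hne
    push_neg at hne
    obtain ⟨j, hj⟩ := hne
    have hstrict : (∏ i, μ i) < ∏ i, ((1 + μ i) * 2⁻¹) ^ 2 := by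
      refine Finset.prod_lt_prod (fun i _ => hμpos i) (fun i _ => by nlinarith [sq_nonneg (1 - μ i)]) ?_
      refine ⟨j, Finset.mem_univ j, ?_⟩
      have h0 : (1:ℝ) - μ j ≠ 0 := sub_ne_zero.mpr (Ne.symm hj)
      have : 0 < (1 - μ j) ^ 2 := by positivity
      nlinarith [this]
    rw [hgprod] at hstrict
    linarith
  -- conclude C = 1 and A = B
  have hC1 : C = 1 := by
    have hμfun : (RCLike.ofReal ∘ μ : Fin n → ℝ) = fun _ => 1 := by
      funext i; simp [hμ1 i]
    rw [hspec, hμfun]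
    rw [show (diagonal (fun _ => (1:ℝ)) : Matrix (Fin n) (Fin n) ℝ) = 1 from diagonal_one]
    rw [Matrix.mul_one, hUU]
  rw [hC1, Matrix.mul_one, hSS] at hB'
  exact hB'

theorem D_optimal_infoMatrix_unique {d k : ℕ} (hd : 0 < d) (hk : 0 < k)
    (φ : Fin k → (Fin d → ℝ))
    (hspan : Submodule.span ℝ (Set.range φ) = ⊤)
    (π π' : Fin k → ℝ) (hπ : IsDesign π) (hπ' : IsDesign π')
    (hinv : IsUnit (infoMatrix φ π)) (hinv' : IsUnit (infoMatrix φ π'))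
    (hopt : ∀ ρ, IsDesign ρ → (infoMatrix φ ρ).det ≤ (infoMatrix φ π).det)
    (hopt' : ∀ ρ, IsDesign ρ → (infoMatrix φ ρ).det ≤ (infoMatrix φ π').det) :
    infoMatrix φ π = infoMatrix φ π' := by
  have hA : (infoMatrix φ π).PosSemidef := infoMatrix_posSemidef φ hπ.1
  have hB : (infoMatrix φ π').PosSemidef := infoMatrix_posSemidef φ hπ'.1
  have hdA : (infoMatrix φ π).det ≠ 0 :=
    ((isUnit_iff_isUnit_det _).mp hinv).ne_zero
  have hdB : (infoMatrix φ π').det ≠ 0 :=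
    ((isUnit_iff_isUnit_det _).mp hinv').ne_zero
  set ρ : Fin k → ℝ := fun i => 2⁻¹ * (π i + π' i) with hρdef
  have hρ : IsDesign ρ := by
    constructor
    · intro i
      have := hπ.1 i
      have := hπ'.1 i
      positivity
    · rw [hρdef]
      simp only
      rw [← Finset.mul_sum, Finset.sum_add_distrib, hπ.2, hπ'.2]
      norm_num
  have hmid : infoMatrix φ ρ = (2:ℝ)⁻¹ • (infoMatrix φ π + infoMatrix φ π') := by
    unfold infoMatrix
    rw [smul_add, Finset.smul_sum, Finset.smul_sum, ← Finset.sum_add_distrib]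
    refine Finset.sum_congr rfl fun i _ => ?_
    rw [smul_smul, smul_smul, ← add_smul, hρdef]
    congr 1
    ring
  have hρpsd : (infoMatrix φ ρ).PosSemidef := infoMatrix_posSemidef φ hρ.1
  have hρnn : 0 ≤ (infoMatrix φ ρ).det := posSemidef_det_nonneg hρpsd
  apply midpoint_det_le_imp_eq hA hB hdA hdB
  rw [← hmid, sq]
  exact mul_le_mul (hopt ρ hρ) (hopt' ρ hρ) hρnn (le_trans hρnn (hopt ρ hρ))
end
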